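/- Let p be a prime, m a positive integer, k an integer with 1 ≤ k ≤ m−1, q = p^k, and α, a, b ∈ F. For every nonzero r ∈ F and all x, y, u, v ∈ F, writing (s₁, s₂) = (x,y) ∘ (u,v) for the Taniguchi multiplication T(q,α,a,b), one has (r^{q+1}·s₁, r^{q²+1}·s₂) = (r·x, r·y) ∘ (r·u, r·v). Consequently, for every nonzero r ∈ F the triple γ_r = (N_r, L_r, M_r), where N_r(x,y) = (r^{q+1}·x, r^{q²+1}·y) and L_r(x,y) = M_r(x,y) = (r·x, r·y), is an autotopism of T(q,α,a,b). -/

import Mathlib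

open scoped Classical
noncomputable section

abbrev GF (p m : ℕ) [Fact p.Prime] := GaloisField p m

/-- The Taniguchi multiplication `T(q,α,a,b)` on `F × F` where `F = F_{p^m}`. -/
def taniMul (p m : ℕ) [Fact p.Prime] (q : ℕ) (α a b : GF p m) :
    GF p m × GF p m → GF p m × GF p m → GF p m × GF p m :=
  fun w z =>
    (w.1 ^ q * z.1 + α ^ q ^ 2 * w.1 * z.1 ^ q
       - a * (w.1 * z.2 ^ q - α ^ q * z.1 * w.2 ^ q)
       - b * (w.2 ^ q * z.2 + α * w.2 * z.2 ^ q),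
     w.1 * z.2 ^ q ^ 2 + w.2 ^ q ^ 2 * z.1)

/-- Two multiplications on `F × F` are isotopic if there are `F_p`-linear bijections
`N, L, M` with `N (w ∘₁ z) = L w ∘₂ M z` for all `w, z`. -/
def Isotopic (p m : ℕ) [Fact p.Prime]
    (mul1 mul2 : GF p m × GF p m → GF p m × GF p m → GF p m × GF p m) : Prop :=
  ∃ N L M : (GF p m × GF p m) ≃ₗ[ZMod p] GF p m × GF p m,
    ∀ w z, N (mul1 w z) = mul2 (L w) (M z)

/-- Multiplication by a nonzero field element as a `ZMod p`-linear equivalence. -/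
def mulLeftEquiv (p m : ℕ) [Fact p.Prime] (c : GF p m) (hc : c ≠ 0) :
    GF p m ≃ₗ[ZMod p] GF p m where
  toFun x := c * x
  invFun x := c⁻¹ * x
  map_add' := mul_add c
  map_smul' s x := mul_smul_comm s c x
  left_inv x := by field_simp
  right_inv x := by field_simp

/-- Lemma 3: for every nonzero `r`, scaling identity for the Taniguchi multiplication,
and consequently `γ_r = (N_r, L_r, M_r)` is an autotopism of `T(q,α,a,b)`. -/
theorem gamma_r_autotopism (p m k : ℕ) [Fact p.Prime] (hm : 0 < m)
    (hk1 : 1 ≤ k) (hk2 : k ≤ m - 1) (α a b : GF p m) (r : GF p m) (hr : r ≠ 0) :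
    (∀ x y u v : GF p m,
      (r ^ (p ^ k + 1) * (taniMul p m (p ^ k) α a b (x, y) (u, v)).1,
       r ^ ((p ^ k) ^ 2 + 1) * (taniMul p m (p ^ k) α a b (x, y) (u, v)).2)
        = taniMul p m (p ^ k) α a b (r * x, r * y) (r * u, r * v)) ∧
    ∃ N L M : (GF p m × GF p m) ≃ₗ[ZMod p] GF p m × GF p m,
      (∀ x y : GF p m, N (x, y) = (r ^ (p ^ k + 1) * x, r ^ ((p ^ k) ^ 2 + 1) * y)) ∧
      (∀ x y : GF p m, L (x, y) = (r * x, r * y)) ∧ M = L ∧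
      ∀ w z, N (taniMul p m (p ^ k) α a b w z)
        = taniMul p m (p ^ k) α a b (L w) (M z) := by
  have key : ∀ x y u v : GF p m,
      (r ^ (p ^ k + 1) * (taniMul p m (p ^ k) α a b (x, y) (u, v)).1,
       r ^ ((p ^ k) ^ 2 + 1) * (taniMul p m (p ^ k) α a b (x, y) (u, v)).2)
        = taniMul p m (p ^ k) α a b (r * x, r * y) (r * u, r * v) := by
    intro x y u v
    simp only [taniMul, Prod.mk.injEq]
    constructor <;> ring
  refine ⟨key, ?_⟩
  refine ⟨(mulLeftEquiv p m _ (pow_ne_zero (p ^ k + 1) hr)).prodCongr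
      (mulLeftEquiv p m _ (pow_ne_zero ((p ^ k) ^ 2 + 1) hr)),
    (mulLeftEquiv p m r hr).prodCongr (mulLeftEquiv p m r hr),
    (mulLeftEquiv p m r hr).prodCongr (mulLeftEquiv p m r hr),
    ?_, ?_, ?_, ?_⟩
  · intro x y; rfl
  · intro x y; rfl
  · rfl
  intro w z
  have := key w.1 w.2 z.1 z.2
  simpa [mulLeftEquiv] using this
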